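/- Let V be a finite set with |V| = n ≥ 2 and let u ≠ v be elements of V. Let P be a path graph on V whose two endpoints are u and v (i.e., a Hamiltonian path on V from u to v), and let G be any connected simple graph on V. Then there exists β₀ > 0 such that for all real β with 0 < β < β₀, the series Σ_{l≥1} β^l (A_G^l)_{uv} and Σ_{l≥1} β^l (A_P^l)_{uv} both converge and Σ_{l≥1} β^l (A_G^l)_{uv} ≥ Σ_{l≥1} β^l (A_P^l)_{uv}, where A_G and A_P denote the adjacency matrices of G and P respectively. -/

import Mathlib

open SimpleGraph

private lemma dart_support_get' {V : Type*} {Q : SimpleGraph V} :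
    ∀ {a b : V} (w : Q.Walk a b) {d : Q.Dart}, d ∈ w.darts →
    ∃ i : ℕ, ∃ h : i + 1 < w.support.length,
      w.support.get ⟨i, by omega⟩ = d.fst ∧ w.support.get ⟨i+1, h⟩ = d.snd := by
  intro a b w
  induction w with
  | nil => intro d hd; simp [Walk.darts_nil] at hd
  | @cons a c b h w ih =>
    intro d hd
    rw [Walk.darts_cons, List.mem_cons] at hd
    rcases hd with rfl | hd
    · refine ⟨0, by simp only [Walk.support_cons, List.length_cons, Walk.length_support]; omega,
        by simp [Walk.support_cons], ?_⟩
      simp only [Walk.support_cons, List.get_cons_succ]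
      cases w <;> rfl
    · obtain ⟨i, hh, h1, h2⟩ := ih hd
      refine ⟨i+1, by simp only [Walk.support_cons, List.length_cons]; omega, ?_, ?_⟩
      · simpa [Walk.support_cons, List.get_cons_succ] using h1
      · simpa [Walk.support_cons, List.get_cons_succ] using h2

private lemma adj_of_support_get' {V : Type*} {Q : SimpleGraph V} {a b : V} (w : Q.Walk a b)
    (i : ℕ) (h : i + 1 < w.support.length) :
    Q.Adj (w.support.get ⟨i, by omega⟩) (w.support.get ⟨i+1, h⟩) := by
  have hc := w.isChain_adj_support
  rw [List.isChain_iff_getElem] at hc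
  exact hc i (by omega)

private lemma walk_len_ge {V : Type*} {Q : SimpleGraph V} (σ : V → ℤ)
    (hσ : ∀ x y, Q.Adj x y → σ x = σ y + 1 ∨ σ y = σ x + 1) :
    ∀ {a b : V} (w : Q.Walk a b), |σ a - σ b| ≤ w.length := by
  intro a b w
  induction w with
  | nil => simp
  | @cons a c b h w ih =>
    have h1 : |σ a - σ c| ≤ 1 := by rcases hσ _ _ h with h' | h' <;> rw [h'] <;> simp
    have h2 := abs_sub_le (σ a) (σ c) (σ b)
    have h3 : (((Walk.cons h w).length : ℤ)) = (w.length : ℤ) + 1 := by simp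
    rw [h3]
    linarith

private lemma adjMatrix_pow_entry_nonneg {V : Type*} [Fintype V] [DecidableEq V]
    (Q : SimpleGraph V) [DecidableRel Q.Adj] (l : ℕ) (x y : V) :
    0 ≤ ((Q.adjMatrix ℝ) ^ l) x y := by
  rw [adjMatrix_pow_apply_eq_card_walk]
  positivity

private lemma adjMatrix_pow_entry_le {V : Type*} [Fintype V] [DecidableEq V]
    (Q : SimpleGraph V) [DecidableRel Q.Adj] :
    ∀ (l : ℕ) (x y : V), ((Q.adjMatrix ℝ) ^ l) x y ≤ (Fintype.card V : ℝ) ^ l := by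
  intro l
  induction l with
  | zero =>
    intro x y
    simp only [pow_zero, Matrix.one_apply]
    split_ifs <;> norm_num
  | succ l ih =>
    intro x y
    rw [pow_succ, Matrix.mul_apply]
    have hb : ∀ k ∈ Finset.univ, ((Q.adjMatrix ℝ) ^ l) x k * (Q.adjMatrix ℝ) k y ≤
        (Fintype.card V : ℝ) ^ l := by
      intro k _
      have h1 : (Q.adjMatrix ℝ) k y ≤ 1 := by
        rw [adjMatrix_apply]; split_ifs <;> norm_num
      have h2 : (0:ℝ) ≤ (Q.adjMatrix ℝ) k y := by
        rw [adjMatrix_apply]; split_ifs <;> norm_num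
      calc ((Q.adjMatrix ℝ) ^ l) x k * (Q.adjMatrix ℝ) k y
          ≤ (Fintype.card V : ℝ) ^ l * 1 :=
            mul_le_mul (ih x k) h1 h2 (by positivity)
        _ = (Fintype.card V : ℝ) ^ l := by ring
    calc (∑ k, ((Q.adjMatrix ℝ) ^ l) x k * (Q.adjMatrix ℝ) k y)
        ≤ (Finset.univ : Finset V).card • ((Fintype.card V : ℝ) ^ l) :=
          Finset.sum_le_card_nsmul _ _ _ hb
      _ = (Fintype.card V : ℝ) ^ (l + 1) := by
          rw [Finset.card_univ, nsmul_eq_mul, pow_succ]; ring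

private lemma summable_aux {V : Type*} [Fintype V] [DecidableEq V]
    (Q : SimpleGraph V) [DecidableRel Q.Adj] {β : ℝ} (hβ0 : 0 < β)
    (hβ : β * (Fintype.card V : ℝ) < 1) (x y : V) :
    Summable fun l : ℕ => β ^ (l + 1) * ((Q.adjMatrix ℝ) ^ (l + 1)) x y := by
  have hc0 : (0:ℝ) ≤ β * (Fintype.card V : ℝ) := by positivity
  apply Summable.of_nonneg_of_le
  · intro l
    exact mul_nonneg (by positivity) (adjMatrix_pow_entry_nonneg Q _ x y)
  · intro l
    calc β ^ (l + 1) * ((Q.adjMatrix ℝ) ^ (l + 1)) x y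
        ≤ β ^ (l + 1) * (Fintype.card V : ℝ) ^ (l + 1) :=
          mul_le_mul_of_nonneg_left (adjMatrix_pow_entry_le Q _ x y) (by positivity)
      _ = (β * (Fintype.card V : ℝ)) ^ (l + 1) := (mul_pow _ _ _).symm
      _ = (β * (Fintype.card V : ℝ)) * (β * (Fintype.card V : ℝ)) ^ l := by rw [pow_succ]; ring
  · exact (summable_geometric_of_lt_one hc0 hβ).mul_left _

/-- Among connected graphs on a fixed vertex set, the Katz similarity
between `u` and `v` is minimized (for all sufficiently small `β > 0`) by a Hamiltonian
path (a "string") with `u` and `v` as its two endpoints. Here `P` is such a path graph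
(its edges are exactly those of a Hamiltonian path `p` from `u` to `v`) and `G` is an
arbitrary connected graph on the same vertex set. -/
theorem stmt_15 {V : Type*} [Fintype V] [DecidableEq V]
    (n : ℕ) (hn : 2 ≤ n) (hcard : Fintype.card V = n)
    (u v : V) (huv : u ≠ v)
    (P : SimpleGraph V) [DecidableRel P.Adj]
    (p : P.Walk u v) (hp : p.IsHamiltonian)
    (hPedges : ∀ e : Sym2 V, e ∈ P.edgeSet ↔ e ∈ p.edges)
    (G : SimpleGraph V) [DecidableRel G.Adj] (hG : G.Connected) :
    ∃ β₀ : ℝ, 0 < β₀ ∧ ∀ β : ℝ, 0 < β → β < β₀ →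
      (Summable fun l : ℕ => β ^ (l + 1) * ((G.adjMatrix ℝ) ^ (l + 1)) u v) ∧
      (Summable fun l : ℕ => β ^ (l + 1) * ((P.adjMatrix ℝ) ^ (l + 1)) u v) ∧
      ∑' l : ℕ, β ^ (l + 1) * ((P.adjMatrix ℝ) ^ (l + 1)) u v ≤
        ∑' l : ℕ, β ^ (l + 1) * ((G.adjMatrix ℝ) ^ (l + 1)) u v := by
  classical
  -- basic facts about the Hamiltonian path `p`
  have hplen : p.length = n - 1 := by rw [hp.length_eq, hcard]
  have hnodup : p.support.Nodup := hp.isPath.support_nodup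
  have hslen : p.support.length = n := by rw [Walk.length_support, hplen]; omega
  set σ : V → ℕ := fun x => p.support.idxOf x with hσdef
  have hσltP : ∀ x : V, σ x < p.support.length := fun x =>
    List.idxOf_lt_length_iff.mpr (hp.mem_support x)
  have hσlt : ∀ x : V, σ x < n := fun x => hslen ▸ hσltP x
  have hσget : ∀ (i : ℕ) (h : i < p.support.length), σ (p.support.get ⟨i, h⟩) = i := by
    intro i h
    simp only [hσdef, List.get_eq_getElem]
    exact hnodup.idxOf_getElem i h
  have hgetσ : ∀ x : V, p.support.get ⟨σ x, hσltP x⟩ = x := fun x => List.idxOf_get _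
  have hσinj : Function.Injective σ := by
    intro x y hxy
    have hx := hgetσ x
    have hy := hgetσ y
    rw [← hx, ← hy]
    congr 1
    exact Fin.ext hxy
  have hσu : σ u = 0 := by
    have h0 : (0:ℕ) < p.support.length := by omega
    have h : p.support.get ⟨0, h0⟩ = u := by
      rw [List.get_of_eq p.support_eq_cons]; rfl
    rw [← h, hσget 0 h0]
  have hσv : σ v = n - 1 := by
    have h0 : n - 1 < p.support.length := by omega
    have hgl := p.getLast_support
    rw [List.getLast_eq_getElem] at hgl
    have h : p.support.get ⟨n - 1, h0⟩ = v := by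
      simp only [List.get_eq_getElem]
      convert hgl using 2
      omega
    rw [← h, hσget _ h0]
  -- adjacency in `P` means consecutive positions
  have hPadj : ∀ x y : V, P.Adj x y → σ x = σ y + 1 ∨ σ y = σ x + 1 := by
    intro x y hxy
    have he : s(x, y) ∈ p.edges := (hPedges s(x, y)).mp hxy
    rw [Walk.edges, List.mem_map] at he
    obtain ⟨d, hd, hde⟩ := he
    obtain ⟨i, hi, h1, h2⟩ := dart_support_get' p hd
    have hde' : s(d.fst, d.snd) = s(x, y) := hde
    rw [Sym2.eq_iff] at hde'
    have hfst : σ d.fst = i := by rw [← h1, hσget]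
    have hsnd : σ d.snd = i + 1 := by rw [← h2, hσget]
    rcases hde' with ⟨hx, hy⟩ | ⟨hx, hy⟩
    · right; rw [← hx, ← hy, hfst, hsnd]
    · left; rw [← hx, ← hy, hfst, hsnd]
  -- every `u`-`v` walk in `P` has length at least `n - 1`
  have hPwalklen : ∀ w : P.Walk u v, n - 1 ≤ w.length := by
    intro w
    have hσ' : ∀ x y : V, P.Adj x y →
        (fun z => ((σ z : ℤ))) x = (fun z => ((σ z : ℤ))) y + 1 ∨
        (fun z => ((σ z : ℤ))) y = (fun z => ((σ z : ℤ))) x + 1 := by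
      intro x y h
      rcases hPadj x y h with h' | h'
      · left; show ((σ x : ℤ)) = (σ y : ℤ) + 1; exact_mod_cast h'
      · right; show ((σ y : ℤ)) = (σ x : ℤ) + 1; exact_mod_cast h'
    have h2 : |((σ u : ℤ)) - ((σ v : ℤ))| ≤ (w.length : ℤ) := walk_len_ge _ hσ' w
    rw [hσu, hσv, Nat.cast_zero, zero_sub, abs_neg, abs_of_nonneg (by positivity)] at h2
    omega
  have hPzero : ∀ l : ℕ, l < n - 1 → ((P.adjMatrix ℝ) ^ l) u v = 0 := by
    intro l hl
    rw [adjMatrix_pow_apply_eq_card_walk]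
    norm_cast
    rw [Fintype.card_eq_zero_iff]
    constructor
    rintro ⟨w, hw⟩
    have := hPwalklen w
    rw [Set.mem_setOf_eq] at hw
    omega
  -- a path in `G` from `u` to `v`
  obtain ⟨q0⟩ := hG.preconnected u v
  set q : G.Walk u v := q0.toPath.1 with hqdef
  have hqpath : q.IsPath := q0.toPath.2
  set m := q.length with hmdef
  have hm1 : 1 ≤ m := by
    by_contra h
    exact huv (Walk.eq_of_length_eq_zero (show q.length = 0 by omega))
  have hmn : m ≤ n - 1 := by
    have h1 : q.support.length ≤ Fintype.card V := hqpath.support_nodup.length_le_card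
    rw [Walk.length_support, hcard] at h1
    omega
  have hGpos : (1 : ℝ) ≤ ((G.adjMatrix ℝ) ^ m) u v := by
    rw [adjMatrix_pow_apply_eq_card_walk]
    have : Nonempty {w : G.Walk u v | w.length = m} := ⟨⟨q, rfl⟩⟩
    exact_mod_cast Nat.one_le_iff_ne_zero.mpr Fintype.card_ne_zero
  -- choose β₀
  have hnR : (2 : ℝ) ≤ (n : ℝ) := by exact_mod_cast hn
  refine ⟨1 / (2 * (n : ℝ) ^ n), by positivity, ?_⟩
  intro β hβ0 hβ
  have hnn : (n : ℝ) ≤ (n : ℝ) ^ n := le_self_pow₀ (by linarith) (by omega)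
  have hβ' : β ≤ 1 / (2 * (n : ℝ)) := le_trans hβ.le (by gcongr <;> linarith)
  have hnne : (n : ℝ) ≠ 0 := by positivity
  have hβn2 : β * n ≤ 1 / 2 := by
    have h := mul_le_mul_of_nonneg_right hβ' (by positivity : (0:ℝ) ≤ (n:ℝ))
    calc β * (n : ℝ) ≤ 1 / (2 * (n:ℝ)) * n := h
      _ = 1 / 2 := by field_simp
  have hβn1 : β * n < 1 := lt_of_le_of_lt hβn2 (by norm_num)
  have hβ1 : β ≤ 1 := by
    refine le_trans hβ' ?_
    rw [div_le_one (by positivity)]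
    linarith
  have hβcard : β * (Fintype.card V : ℝ) < 1 := by rw [hcard]; exact hβn1
  have sumG := summable_aux G hβ0 hβcard u v
  have sumP := summable_aux P hβ0 hβcard u v
  refine ⟨sumG, sumP, ?_⟩
  have hentryP : ∀ l : ℕ, ((P.adjMatrix ℝ) ^ l) u v ≤ (n : ℝ) ^ l := fun l => by
    have := adjMatrix_pow_entry_le P l u v
    rwa [hcard] at this
  by_cases hcase : m = n - 1
  · -- `q` is also a Hamiltonian path from u to v; compare termwise
    have hqlen : q.support.length = n := by rw [Walk.length_support, ← hmdef, hcase]; omega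
    have hqnodup := hqpath.support_nodup
    have hσltq : ∀ x : V, σ x < q.support.length := fun x => by
      rw [hqlen]; exact hσlt x
    set e : V → V := fun x => q.support.get ⟨σ x, hσltq x⟩ with hedef
    have he_inj : Function.Injective e := by
      intro x y hxy
      apply hσinj
      have h := List.nodup_iff_injective_get.mp hqnodup hxy
      exact congrArg Fin.val h
    have he_u : e u = u := by
      have h0 : (0:ℕ) < q.support.length := by omega
      have h : q.support.get ⟨0, h0⟩ = u := by
        rw [List.get_of_eq q.support_eq_cons]; rfl
      show q.support.get ⟨σ u, hσltq u⟩ = u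
      rw [show (⟨σ u, hσltq u⟩ : Fin q.support.length) = ⟨0, h0⟩ from Fin.ext hσu]
      exact h
    have he_v : e v = v := by
      have h0 : n - 1 < q.support.length := by omega
      have hgl := q.getLast_support
      rw [List.getLast_eq_getElem] at hgl
      have h : q.support.get ⟨n - 1, h0⟩ = v := by
        simp only [List.get_eq_getElem]
        convert hgl using 2
        omega
      show q.support.get ⟨σ v, hσltq v⟩ = v
      rw [show (⟨σ v, hσltq v⟩ : Fin q.support.length) = ⟨n - 1, h0⟩ from Fin.ext hσv]
      exact h
    have he_adj : ∀ x y : V, P.Adj x y → G.Adj (e x) (e y) := by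
      intro x y hxy
      rcases hPadj x y hxy with h' | h'
      · have hlt : σ y + 1 < q.support.length := by
          rw [hqlen]; have := hσlt x; omega
        have hadj := adj_of_support_get' q (σ y) hlt
        show G.Adj (q.support.get ⟨σ x, hσltq x⟩) (q.support.get ⟨σ y, hσltq y⟩)
        rw [show (⟨σ x, hσltq x⟩ : Fin q.support.length) = ⟨σ y + 1, hlt⟩ from Fin.ext h']
        exact hadj.symm
      · have hlt : σ x + 1 < q.support.length := by
          rw [hqlen]; have := hσlt y; omega
        have hadj := adj_of_support_get' q (σ x) hlt
        show G.Adj (q.support.get ⟨σ x, hσltq x⟩) (q.support.get ⟨σ y, hσltq y⟩)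
        rw [show (⟨σ y, hσltq y⟩ : Fin q.support.length) = ⟨σ x + 1, hlt⟩ from Fin.ext h']
        exact hadj
    let hom : P →g G := ⟨e, fun {a b} h => he_adj a b h⟩
    have key : ∀ l : ℕ, ((P.adjMatrix ℝ) ^ l) u v ≤ ((G.adjMatrix ℝ) ^ l) u v := by
      intro l
      rw [adjMatrix_pow_apply_eq_card_walk, adjMatrix_pow_apply_eq_card_walk]
      have hFinj : Function.Injective (fun w : {w : P.Walk u v | w.length = l} =>
          (⟨(w.1.map hom).copy he_u he_v, by
            have hw := w.2
            rw [Set.mem_setOf_eq] at hw ⊢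
            rw [Walk.length_copy, Walk.length_map]
            exact hw⟩ : {w : G.Walk u v | w.length = l})) := by
        intro w1 w2 h
        have h' := congrArg Subtype.val h
        simp only at h'
        have h'' := congrArg (fun z : G.Walk u v => z.copy he_u.symm he_v.symm) h'
        simp only [Walk.copy_copy, Walk.copy_rfl_rfl] at h''
        exact Subtype.ext (Walk.map_injective_of_injective he_inj u v h'')
      exact_mod_cast Fintype.card_le_of_injective _ hFinj
    refine Summable.tsum_le_tsum (fun l => ?_) sumP sumG
    exact mul_le_mul_of_nonneg_left (key (l+1)) (by positivity)
  · -- `m < n - 1` : the `G`-sum dominates via its leading term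
    have hm2 : m < n - 1 := lt_of_le_of_ne hmn hcase
    set r : ℝ := β * n with hrdef
    have hr0 : (0:ℝ) ≤ r := by positivity
    have hr12 : r ≤ 1/2 := hβn2
    have hrlt1 : r < 1 := hβn1
    have hsum2 : Summable fun l : ℕ => r ^ (n-1) * r ^ l :=
      (summable_geometric_of_lt_one hr0 hrlt1).mul_left _
    have hPsum : (∑' l : ℕ, β ^ (l+1) * ((P.adjMatrix ℝ) ^ (l+1)) u v) ≤
        r ^ (n-1) * (1 - r)⁻¹ := by
      have hsplit := Summable.sum_add_tsum_nat_add
        (f := fun l : ℕ => β ^ (l+1) * ((P.adjMatrix ℝ) ^ (l+1)) u v) (n-2) sumP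
      have hzero : (∑ i ∈ Finset.range (n-2), β ^ (i+1) * ((P.adjMatrix ℝ) ^ (i+1)) u v) = 0 := by
        apply Finset.sum_eq_zero
        intro i hi
        rw [Finset.mem_range] at hi
        rw [hPzero (i+1) (by omega), mul_zero]
      have htail : ∀ k : ℕ, β ^ ((k+(n-2))+1) * ((P.adjMatrix ℝ) ^ ((k+(n-2))+1)) u v ≤
          r ^ (n-1) * r ^ k := by
        intro k
        have hexp : (k+(n-2))+1 = (n-1) + k := by omega
        rw [hexp]
        calc β ^ ((n-1)+k) * ((P.adjMatrix ℝ) ^ ((n-1)+k)) u v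
            ≤ β ^ ((n-1)+k) * (n : ℝ) ^ ((n-1)+k) :=
              mul_le_mul_of_nonneg_left (hentryP _) (by positivity)
          _ = r ^ ((n-1)+k) := by rw [hrdef, mul_pow]
          _ = r ^ (n-1) * r ^ k := pow_add r _ _
      have hsumtail : Summable (fun k : ℕ =>
          β ^ ((k+(n-2))+1) * ((P.adjMatrix ℝ) ^ ((k+(n-2))+1)) u v) :=
        Summable.of_nonneg_of_le (fun k => mul_nonneg (by positivity)
          (adjMatrix_pow_entry_nonneg P _ u v)) htail hsum2
      calc (∑' l : ℕ, β ^ (l+1) * ((P.adjMatrix ℝ) ^ (l+1)) u v)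
          = 0 + ∑' k : ℕ, β ^ ((k+(n-2))+1) * ((P.adjMatrix ℝ) ^ ((k+(n-2))+1)) u v := by
            rw [← hsplit, hzero]
        _ = ∑' k : ℕ, β ^ ((k+(n-2))+1) * ((P.adjMatrix ℝ) ^ ((k+(n-2))+1)) u v := zero_add _
        _ ≤ ∑' k : ℕ, r ^ (n-1) * r ^ k := Summable.tsum_le_tsum htail hsumtail hsum2
        _ = r ^ (n-1) * ∑' k : ℕ, r ^ k := tsum_mul_left
        _ = r ^ (n-1) * (1 - r)⁻¹ := by rw [tsum_geometric_of_lt_one hr0 hrlt1]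
    have hinv : (1 - r)⁻¹ ≤ 2 := by
      have h12 : (1:ℝ)/2 ≤ 1 - r := by linarith
      calc (1 - r)⁻¹ ≤ ((1:ℝ)/2)⁻¹ := by
            apply inv_anti₀ (by norm_num) h12
        _ = 2 := by norm_num
    have hk1 : 1 ≤ n - 1 - m := by omega
    have hksum : (n - 1 - m) + m = n - 1 := by omega
    have e1 : r ^ (n-1) = (n:ℝ) ^ (n-1) * (β ^ (n-1-m) * β ^ m) := by
      rw [hrdef, mul_pow, ← pow_add, hksum]; ring
    have e2 : β ^ (n-1-m) ≤ β := by
      calc β ^ (n-1-m) ≤ β ^ 1 := pow_le_pow_of_le_one hβ0.le hβ1 hk1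
        _ = β := pow_one β
    have h4 : β * (2 * (n:ℝ) ^ n) < 1 := (lt_div_iff₀ (by positivity)).mp hβ
    have hpows : (n:ℝ) ^ (n-1) ≤ (n:ℝ) ^ n := by
      apply pow_le_pow_right₀ (by linarith) (by omega)
    have e3 : 2 * ((n:ℝ) ^ (n-1) * β) ≤ 1 := by nlinarith
    have hmain : r ^ (n-1) * 2 ≤ β ^ m := by
      calc r ^ (n-1) * 2 = 2 * ((n:ℝ) ^ (n-1) * (β ^ (n-1-m) * β ^ m)) := by rw [e1]; ring
        _ ≤ 2 * ((n:ℝ) ^ (n-1) * (β * β ^ m)) := by gcongr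
        _ = (2 * ((n:ℝ) ^ (n-1) * β)) * β ^ m := by ring
        _ ≤ 1 * β ^ m := mul_le_mul_of_nonneg_right e3 (by positivity)
        _ = β ^ m := one_mul _
    have hGge : β ^ m ≤ ∑' l : ℕ, β ^ (l+1) * ((G.adjMatrix ℝ) ^ (l+1)) u v := by
      have hterm := Summable.le_tsum sumG (m-1) (fun j _ =>
        mul_nonneg (by positivity) (adjMatrix_pow_entry_nonneg G _ u v))
      have hm' : m - 1 + 1 = m := by omega
      rw [hm'] at hterm
      calc β ^ m = β ^ m * 1 := by ring
        _ ≤ β ^ m * ((G.adjMatrix ℝ) ^ m) u v :=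
            mul_le_mul_of_nonneg_left hGpos (by positivity)
        _ ≤ _ := hterm
    have hfinal : r ^ (n-1) * (1 - r)⁻¹ ≤ r ^ (n-1) * 2 :=
      mul_le_mul_of_nonneg_left hinv (by positivity)
    linarith
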